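/- Let G be a finite connected graph on n vertices and {S₁,…,S_m} a partition of E(G) such that each S_i is an edge cut whose removal leaves two connected components G_i and G_i', and such that (i) every shortest path between two vertices of G_i avoids S_i, (ii) every shortest path between two vertices of G_i' avoids S_i, and (iii) every shortest path between a vertex of G_i and a vertex of G_i' uses exactly one edge of S_i. Then the Wiener index satisfies W(G) = Σ_{i=1}^m |V(G_i)|·|V(G_i')|. -/

import Mathlib

open SimpleGraph Finset

lemma list_len_sum_countP {α : Type*} [DecidableEq α] (m : ℕ) (S : Fin m → Finset α)
    (l : List α) (h : ∀ e ∈ l, ∃! i : Fin m, e ∈ S i) :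
    l.length = ∑ i : Fin m, l.countP (fun e => decide (e ∈ S i)) := by
  induction l with
  | nil => simp
  | cons a l ih =>
    simp only [List.length_cons, List.countP_cons]
    rw [Finset.sum_add_distrib, ← ih (fun e he => h e (List.mem_cons_of_mem _ he))]
    have : ∑ i : Fin m, (if (decide (a ∈ S i)) = true then 1 else 0) = 1 := by
      obtain ⟨i0, hi0, huniq⟩ := h a List.mem_cons_self
      rw [Finset.sum_eq_single i0]
      · simp [hi0]
      · intro j _ hj
        simp only [decide_eq_true_eq, ite_eq_right_iff]
        intro hja; exact absurd (huniq j hja) hj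
      · simp
    omega

theorem stmt1 {V : Type*} [Fintype V] [DecidableEq V] (G : SimpleGraph V) [DecidableRel G.Adj]
    (hconn : G.Connected) (m : ℕ) (S : Fin m → Finset (Sym2 V))
    (hsub : ∀ i, S i ⊆ G.edgeFinset)
    (hpart : ∀ e ∈ G.edgeFinset, ∃! i : Fin m, e ∈ S i)
    (A B : Fin m → Finset V)
    (hdisj : ∀ i, Disjoint (A i) (B i)) (hcover : ∀ i, A i ∪ B i = Finset.univ)
    (hAne : ∀ i, (A i).Nonempty) (hBne : ∀ i, (B i).Nonempty)
    (hcomp : ∀ i, ∀ u v : V, (G.deleteEdges ↑(S i)).Reachable u v ↔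
      ((u ∈ A i ∧ v ∈ A i) ∨ (u ∈ B i ∧ v ∈ B i)))
    (hi : ∀ i, ∀ u v : V, u ∈ A i → v ∈ A i → ∀ p : G.Walk u v,
      p.length = G.dist u v → ∀ e ∈ p.edges, e ∉ S i)
    (hii : ∀ i, ∀ u v : V, u ∈ B i → v ∈ B i → ∀ p : G.Walk u v,
      p.length = G.dist u v → ∀ e ∈ p.edges, e ∉ S i)
    (hiii : ∀ i, ∀ u v : V, u ∈ A i → v ∈ B i → ∀ p : G.Walk u v,
      p.length = G.dist u v → p.edges.countP (fun e => decide (e ∈ S i)) = 1) :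
    ∑ u : V, ∑ v : V, G.dist u v = 2 * ∑ i : Fin m, (A i).card * (B i).card := by
  have hBiff : ∀ i, ∀ u : V, u ∈ B i ↔ u ∉ A i := by
    intro i u
    constructor
    · intro hu ha; exact Finset.disjoint_left.mp (hdisj i) ha hu
    · intro ha
      have : u ∈ A i ∪ B i := by rw [hcover i]; exact Finset.mem_univ u
      rcases Finset.mem_union.mp this with h | h
      · exact absurd h ha
      · exact h
  -- key: dist u v = ∑ i, indicator
  have key : ∀ u v : V, G.dist u v =
      ∑ i : Fin m, ((if u ∈ A i then 1 else 0) * (if v ∈ B i then 1 else 0)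
        + (if v ∈ A i then 1 else 0) * (if u ∈ B i then 1 else 0)) := by
    intro u v
    obtain ⟨p, hp⟩ := hconn.exists_walk_length_eq_dist u v
    have hedges : ∀ e ∈ p.edges, ∃! i : Fin m, e ∈ S i := by
      intro e he
      exact hpart e (by rw [SimpleGraph.mem_edgeFinset]; exact p.edges_subset_edgeSet he)
    have hlen : p.length = p.edges.length := (SimpleGraph.Walk.length_edges p).symm
    rw [← hp, hlen, list_len_sum_countP m S p.edges hedges]
    apply Finset.sum_congr rfl
    intro i _
    by_cases hu : u ∈ A i <;> by_cases hv : v ∈ A i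
    · -- both in A: count 0
      have := hi i u v hu hv p hp
      have hnBu : u ∉ B i := fun h => ((hBiff i u).mp h) hu
      have hnBv : v ∉ B i := fun h => ((hBiff i v).mp h) hv
      rw [List.countP_eq_zero.mpr (by intro e he; simpa using this e he)]
      simp [hnBu, hnBv]
    · -- u ∈ A, v ∈ B: count 1
      have hvB : v ∈ B i := (hBiff i v).mpr hv
      have := hiii i u v hu hvB p hp
      simp [hu, hv, hvB, this, (hBiff i u)]
    · -- v ∈ A, u ∈ B: count 1 via reverse
      have huB : u ∈ B i := (hBiff i u).mpr hu
      have hrev : p.reverse.length = G.dist v u := by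
        rw [SimpleGraph.Walk.length_reverse, hp, SimpleGraph.dist_comm]
      have h1 := hiii i v u hv huB p.reverse hrev
      rw [SimpleGraph.Walk.edges_reverse, List.countP_reverse] at h1
      simp [hu, hv, huB, h1, (hBiff i v)]
    · -- both in B: count 0
      have huB : u ∈ B i := (hBiff i u).mpr hu
      have hvB : v ∈ B i := (hBiff i v).mpr hv
      have := hii i u v huB hvB p hp
      rw [List.countP_eq_zero.mpr (by intro e he; simpa using this e he)]
      simp [hu, hv]
  calc ∑ u : V, ∑ v : V, G.dist u v
      = ∑ u : V, ∑ v : V, ∑ i : Fin m,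
        ((if u ∈ A i then 1 else 0) * (if v ∈ B i then 1 else 0)
          + (if v ∈ A i then 1 else 0) * (if u ∈ B i then 1 else 0)) := by
        simp_rw [key]
    _ = ∑ i : Fin m, ∑ u : V, ∑ v : V,
        ((if u ∈ A i then 1 else 0) * (if v ∈ B i then 1 else 0)
          + (if v ∈ A i then 1 else 0) * (if u ∈ B i then 1 else 0)) := by
        rw [show (∑ u : V, ∑ v : V, ∑ i : Fin m,
          ((if u ∈ A i then 1 else 0) * (if v ∈ B i then 1 else 0)
            + (if v ∈ A i then 1 else 0) * (if u ∈ B i then 1 else 0)))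
          = ∑ u : V, ∑ i : Fin m, ∑ v : V,
          ((if u ∈ A i then 1 else 0) * (if v ∈ B i then 1 else 0)
            + (if v ∈ A i then 1 else 0) * (if u ∈ B i then 1 else 0)) from
          Finset.sum_congr rfl fun u _ => Finset.sum_comm]
        exact Finset.sum_comm
    _ = 2 * ∑ i : Fin m, (A i).card * (B i).card := by
        rw [Finset.mul_sum]
        apply Finset.sum_congr rfl
        intro i _
        have hA : ∑ u : V, (if u ∈ A i then (1:ℕ) else 0) = (A i).card := by
          simp [Finset.sum_boole, Finset.filter_mem_eq_inter]
        have hB : ∑ u : V, (if u ∈ B i then (1:ℕ) else 0) = (B i).card := by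
          simp [Finset.sum_boole, Finset.filter_mem_eq_inter]
        simp_rw [Finset.sum_add_distrib, ← Finset.mul_sum, ← Finset.sum_mul, hA, hB]
        rw [← Finset.mul_sum, hB]
        ring
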